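/- Let G be a group, g₀ ∈ G, Z the centralizer of g₀, C the conjugacy class of g₀, τ : C → G a section with τ(c) g₀ τ(c)⁻¹ = c, V a complex vector space, ρ : Z →* (V →ₗ[ℂ] V)ˣ a representation, and π the associated homomorphism on functions C → V given by (π(g) f)(c) := ρ(τ(c)⁻¹ g τ(g⁻¹ c g)) (f (g⁻¹ c g)). For h ∈ G let P_h be the linear operator on functions C → V given by (P_h f)(c) := (if (c : G) = h then f c else 0), and set act(h, g) := P_h ∘ π(g). Then for all h₁, h₂, g₁, g₂: act(h₁, g₁) ∘ act(h₂, g₂) = (if h₁ = g₁ h₂ g₁⁻¹ then 1 else 0) • act(h₁, g₁ g₂). (Thus the action of the basis elements δ_h g respects the Drinfeld double multiplication (δ_{h₁} g₁)(δ_{h₂} g₂) = δ_{h₁, g₁ h₂ g₁⁻¹} δ_{h₁} g₁g₂.) -/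
import Mathlib


variable {G : Type*} [Group G]

/-- The conjugacy class `{x g₀ x⁻¹ : x ∈ G}` of `g₀`. -/
def conjClass (g₀ : G) : Set G := {x | ∃ g : G, g * g₀ * g⁻¹ = x}

/-- The conjugacy class is closed under conjugation. -/
lemma conj_mem_conjClass (g₀ g : G) (c : conjClass g₀) :
    g⁻¹ * (c : G) * g ∈ conjClass g₀ := by
  obtain ⟨x, hx⟩ := c.2
  refine ⟨g⁻¹ * x, ?_⟩
  rw [← hx]; group

/-- `τ(c)⁻¹ g τ(g⁻¹ c g)` lies in the centralizer of `g₀`. -/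
lemma section_conj_mem_centralizer (g₀ : G) (τ : conjClass g₀ → G)
    (hτ : ∀ c : conjClass g₀, τ c * g₀ * (τ c)⁻¹ = (c : G)) (g : G) (c : conjClass g₀) :
    (τ c)⁻¹ * g * τ ⟨g⁻¹ * (c : G) * g, conj_mem_conjClass g₀ g c⟩
      ∈ Subgroup.centralizer ({g₀} : Set G) := by
  rw [Subgroup.mem_centralizer_iff]
  intro h hh
  rw [Set.mem_singleton_iff] at hh
  rw [hh]
  set A := τ c with hAdef
  set B := τ ⟨g⁻¹ * (c : G) * g, conj_mem_conjClass g₀ g c⟩ with hBdef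
  have hA : A * g₀ * A⁻¹ = (c : G) := hτ c
  have hB : B * g₀ * B⁻¹ = g⁻¹ * (c : G) * g := hτ _
  have h2 : B * g₀ = g⁻¹ * (c : G) * g * B := by rw [← hB]; group
  have key : A * (g₀ * (A⁻¹ * g * B)) = A * (A⁻¹ * g * B * g₀) := by
    calc A * (g₀ * (A⁻¹ * g * B)) = (A * g₀ * A⁻¹) * g * B := by group
    _ = (c : G) * g * B := by rw [hA]
    _ = g * (g⁻¹ * (c : G) * g * B) := by group
    _ = g * (B * g₀) := by rw [← h2]
    _ = A * (A⁻¹ * g * B * g₀) := by group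
  exact mul_left_cancel key

/-- The Drinfeld-double representation of `G` on functions `C → V`, given a
representation `ρ` of the centralizer `Z` of `g₀` on `V`:
`(π(g) f)(c) = ρ(τ(c)⁻¹ g τ(g⁻¹ c g)) (f (g⁻¹ c g))`. -/
def piRep {V : Type*} [AddCommGroup V] [Module ℂ V] (g₀ : G)
    (τ : conjClass g₀ → G)
    (hτ : ∀ c : conjClass g₀, τ c * g₀ * (τ c)⁻¹ = (c : G))
    (ρ : Subgroup.centralizer ({g₀} : Set G) →* (V →ₗ[ℂ] V)ˣ) (g : G) :
    (conjClass g₀ → V) →ₗ[ℂ] (conjClass g₀ → V) where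
  toFun f := fun c =>
    (ρ ⟨(τ c)⁻¹ * g * τ ⟨g⁻¹ * (c : G) * g, conj_mem_conjClass g₀ g c⟩,
        section_conj_mem_centralizer g₀ τ hτ g c⟩ : V →ₗ[ℂ] V)
      (f ⟨g⁻¹ * (c : G) * g, conj_mem_conjClass g₀ g c⟩)
  map_add' f₁ f₂ := by funext c; simp
  map_smul' a f := by funext c; simp

/-- The projection `P_h` onto the fiber where the class element equals `h`:
`(P_h f)(c) = [c = h] f(c)`. -/
def Pmap [DecidableEq G] {V : Type*} [AddCommGroup V] [Module ℂ V] (g₀ : G) (h : G) :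
    (conjClass g₀ → V) →ₗ[ℂ] (conjClass g₀ → V) where
  toFun f := fun c => if (c : G) = h then f c else 0
  map_add' f₁ f₂ := by
    funext c
    by_cases hc : (c : G) = h <;> simp [hc]
  map_smul' a f := by
    funext c
    by_cases hc : (c : G) = h <;> simp [hc]

/-- The action `act(h, g) = P_h ∘ π(g)` of the Drinfeld double basis element
`δ_h g` on functions `C → V`. -/
def act [DecidableEq G] {V : Type*} [AddCommGroup V] [Module ℂ V] (g₀ : G)
    (τ : conjClass g₀ → G)
    (hτ : ∀ c : conjClass g₀, τ c * g₀ * (τ c)⁻¹ = (c : G))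
    (ρ : Subgroup.centralizer ({g₀} : Set G) →* (V →ₗ[ℂ] V)ˣ) (h g : G) :
    (conjClass g₀ → V) →ₗ[ℂ] (conjClass g₀ → V) :=
  Pmap g₀ h ∘ₗ piRep g₀ τ hτ ρ g

/-- The action of the basis elements `δ_h g` respects the Drinfeld double
multiplication: `act(h₁,g₁) ∘ act(h₂,g₂) = [h₁ = g₁ h₂ g₁⁻¹] • act(h₁, g₁g₂)`. -/
theorem act_respects_drinfeld_double_mul [DecidableEq G]
    {V : Type*} [AddCommGroup V] [Module ℂ V] (g₀ : G)
    (τ : conjClass g₀ → G)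
    (hτ : ∀ c : conjClass g₀, τ c * g₀ * (τ c)⁻¹ = (c : G))
    (ρ : Subgroup.centralizer ({g₀} : Set G) →* (V →ₗ[ℂ] V)ˣ) :
    ∀ h₁ h₂ g₁ g₂ : G,
      act g₀ τ hτ ρ h₁ g₁ ∘ₗ act g₀ τ hτ ρ h₂ g₂
        = (if h₁ = g₁ * h₂ * g₁⁻¹ then (1 : ℂ) else 0) • act g₀ τ hτ ρ h₁ (g₁ * g₂) := by
  intro h₁ h₂ g₁ g₂
  ext f c
  simp only [act, Pmap, piRep, LinearMap.comp_apply, LinearMap.coe_mk, AddHom.coe_mk,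
    LinearMap.smul_apply, Pi.smul_apply]
  by_cases hc : (c : G) = h₁
  · rw [if_pos hc, if_pos hc]
    have hcc : (⟨g₂⁻¹ * (g₁⁻¹ * (c : G) * g₁) * g₂,
          conj_mem_conjClass g₀ g₂ ⟨g₁⁻¹ * (c : G) * g₁, conj_mem_conjClass g₀ g₁ c⟩⟩ :
            conjClass g₀)
        = ⟨(g₁ * g₂)⁻¹ * (c : G) * (g₁ * g₂), conj_mem_conjClass g₀ (g₁ * g₂) c⟩ := by
      apply Subtype.ext
      show g₂⁻¹ * (g₁⁻¹ * (c : G) * g₁) * g₂ = (g₁ * g₂)⁻¹ * (c : G) * (g₁ * g₂)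
      group
    by_cases hd : h₁ = g₁ * h₂ * g₁⁻¹
    · have hc₁h : g₁⁻¹ * (c : G) * g₁ = h₂ := by rw [hc, hd]; group
      have key : ∀ (a b : Subgroup.centralizer ({g₀} : Set G)) (v : V),
          ((ρ a : (V →ₗ[ℂ] V)ˣ) : V →ₗ[ℂ] V) (((ρ b : (V →ₗ[ℂ] V)ˣ) : V →ₗ[ℂ] V) v)
            = ((ρ (a * b) : (V →ₗ[ℂ] V)ˣ) : V →ₗ[ℂ] V) v := by
        intro a b v; rw [map_mul]; rfl
      rw [if_pos hd, one_smul, if_pos hc₁h, key, congrArg f hcc]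
      congr 2
      refine congrArg ρ (Subtype.ext ?_)
      show (τ c)⁻¹ * g₁ * τ ⟨g₁⁻¹ * (c : G) * g₁, conj_mem_conjClass g₀ g₁ c⟩ *
          ((τ ⟨g₁⁻¹ * (c : G) * g₁, conj_mem_conjClass g₀ g₁ c⟩)⁻¹ * g₂ * τ _) =
          (τ c)⁻¹ * (g₁ * g₂) * τ _
      rw [hcc]
      group
    · have hc₁h : ¬ (g₁⁻¹ * (c : G) * g₁ = h₂) := by
        rw [hc]; intro he; exact hd (by rw [← he]; group)
      rw [if_neg hc₁h, if_neg hd, zero_smul, map_zero]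
  · simp [hc]
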